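/- Let φ(x,t) = t^p + a(x) t^q with 1 < p < q < ∞ and a a nonnegative function in C^{0,α}(ℝⁿ) for some α ∈ (0,1]. Let E be a compact subset of a bounded open set O ⊆ ℝⁿ. Then there is a constant c = c(p,q) > 0 such that cap_φ^inf(E;O) ≥ c · min{ cap_p(E;O), |O| · (cap_p(E;O)/|O|)^{q/p} }, where |O| denotes the Lebesgue measure of O. -/

import Mathlib

open MeasureTheory Metric Set
open scoped ENNReal NNReal

noncomputable section

/-- Euclidean space `ℝⁿ`. -/
abbrev En (n : ℕ) : Type := EuclideanSpace ℝ (Fin n)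

/-- Norm of the (a.e. defined, by Rademacher's theorem) gradient of `u` at `x`. -/
def gnorm {n : ℕ} (u : En n → ℝ) (x : En n) : ℝ := ‖fderiv ℝ u x‖

/-- Admissible test functions for the level-`t` capacity of `E` in `O`:
Lipschitz on the closure of `O`, `u ≥ t` on `E`, `u = 0` on `∂O`. -/
def Adm {n : ℕ} (E O : Set (En n)) (t : ℝ) : Set (En n → ℝ) :=
  {u | (∃ K, LipschitzOnWith K u (closure O)) ∧ (∀ x ∈ E, t ≤ u x) ∧
    ∀ x ∈ frontier O, u x = 0}

/-- Level-`t` variational capacity with integrand `ψ` and normalization `ψm`. -/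
def capLevel {n : ℕ} (ψ : En n → ℝ → ℝ) (ψm : ℝ → ℝ)
    (E O : Set (En n)) (t : ℝ) : ℝ :=
  sInf ((fun u => ∫ x in O, ψ x (gnorm u x) / ψm t) '' Adm E O t)

/-- Infimal capacity with integrand `ψ` and normalization `ψm`. -/
def capInfGen {n : ℕ} (ψ : En n → ℝ → ℝ) (ψm : ℝ → ℝ) (E O : Set (En n)) : ℝ :=
  ⨅ t : Ioi (0 : ℝ), capLevel ψ ψm E O (t : ℝ)

/-- The double-phase integrand `φ(x,t) = t^p + a(x) t^q`. -/
def phi {n : ℕ} (a : En n → ℝ) (p q : ℝ) (x : En n) (t : ℝ) : ℝ :=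
  t ^ p + a x * t ^ q

/-- `a_O^- = inf_{x ∈ O} a(x)`. -/
def aInfOn {n : ℕ} (a : En n → ℝ) (O : Set (En n)) : ℝ := sInf (a '' O)

/-- `a_O^+ = sup_{x ∈ O} a(x)`. -/
def aSupOn {n : ℕ} (a : En n → ℝ) (O : Set (En n)) : ℝ := sSup (a '' O)

/-- `φ_O^-(t) = t^p + a_O^- t^q`. -/
def phiMinus {n : ℕ} (a : En n → ℝ) (p q : ℝ) (O : Set (En n)) (t : ℝ) : ℝ :=
  t ^ p + aInfOn a O * t ^ q

/-- Level-`t` variational capacity for the double-phase integrand. -/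
def capPhiLevel {n : ℕ} (a : En n → ℝ) (p q t : ℝ) (E O : Set (En n)) : ℝ :=
  capLevel (phi a p q) (phiMinus a p q O) E O t

/-- Infimal `φ`-capacity. -/
def capPhiInf {n : ℕ} (a : En n → ℝ) (p q : ℝ) (E O : Set (En n)) : ℝ :=
  ⨅ t : Ioi (0 : ℝ), capPhiLevel a p q (t : ℝ) E O

/-- Variational `p`-capacity. -/
def capP {n : ℕ} (p : ℝ) (E O : Set (En n)) : ℝ :=
  sInf ((fun u => ∫ x in O, gnorm u x ^ p) '' Adm E O 1)

/-- The rescaled set `{x ∈ B̄(0,1/2) : z + r x ∈ E}`. -/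
def shiftedSet {n : ℕ} (E : Set (En n)) (z : En n) (r : ℝ) : Set (En n) :=
  {x ∈ closedBall (0 : En n) (1 / 2) | z + r • x ∈ E}

/-- Local uniform infimal `φ`-fatness with parameters `cfat` and `ro`. -/
def LocUnifPhiFat {n : ℕ} (a : En n → ℝ) (p q : ℝ) (E : Set (En n))
    (cfat ro : ℝ) : Prop :=
  ∀ z ∈ E, ∀ r : ℝ, 0 < r → r < ro →
    cfat ≤ capPhiInf (fun x => a (z + r • x)) p q (shiftedSet E z r) (ball (0 : En n) 1)

/-- Local uniform `p`-fatness with parameters `cfat` and `ro`. -/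
def LocUnifPFat {n : ℕ} (p : ℝ) (E : Set (En n)) (cfat ro : ℝ) : Prop :=
  ∀ z ∈ E, ∀ r : ℝ, 0 < r → r < ro →
    cfat ≤ capP p (shiftedSet E z r) (ball (0 : En n) 1)

/-- `Lip_0(Ω)`: Lipschitz functions with compact support contained in `Ω`,
extended by zero to `ℝⁿ`. -/
def Lip0 {n : ℕ} (Ω : Set (En n)) : Set (En n → ℝ) :=
  {u | (∃ K, LipschitzWith K u) ∧ HasCompactSupport u ∧ tsupport u ⊆ Ω}

/-- Restricted centered maximal operator `M_R f(x) = sup_{0<r<R} ⨍_{B(x,r)} |f|`. -/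
def maxOp {n : ℕ} (R : ℝ) (f : En n → ℝ) (x : En n) : ℝ :=
  ⨆ r : Ioo (0 : ℝ) R, ⨍ y in ball x (r : ℝ), |f y|

section AuxLemmas

variable {n : ℕ}

lemma gnorm_nonneg (u : En n → ℝ) (x : En n) : 0 ≤ gnorm u x := norm_nonneg _

lemma gnorm_measurable (u : En n → ℝ) : Measurable (gnorm u) :=
  (measurable_fderiv ℝ u).norm

lemma adm_const_mul {E O : Set (En n)} {t : ℝ} {u : En n → ℝ}
    (hu : u ∈ Adm E O t) {c : ℝ} (hc : 0 < c) :
    (fun x => c * u x) ∈ Adm E O (c * t) := by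
  obtain ⟨⟨K, hK⟩, huE, hufr⟩ := hu
  refine ⟨⟨c.toNNReal * K, ?_⟩, fun x hx => mul_le_mul_of_nonneg_left (huE x hx) hc.le,
    fun x hx => by simp [hufr x hx]⟩
  rw [lipschitzOnWith_iff_dist_le_mul] at hK ⊢
  intro x hx y hy
  have h1 : dist (c * u x) (c * u y) = c * dist (u x) (u y) := by
    rw [Real.dist_eq, Real.dist_eq, ← mul_sub, abs_mul, abs_of_nonneg hc.le]
  rw [h1]
  calc c * dist (u x) (u y) ≤ c * (K * dist x y) :=
        mul_le_mul_of_nonneg_left (hK x hx y hy) hc.le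
    _ = ((c.toNNReal * K : NNReal) : ℝ) * dist x y := by
        push_cast
        rw [Real.coe_toNNReal c hc.le]
        ring

lemma gnorm_const_mul (u : En n → ℝ) {c : ℝ} (hc : c ≠ 0) (x : En n) :
    gnorm (fun y => c * u y) x = |c| * gnorm u x := by
  by_cases hd : DifferentiableAt ℝ u x
  · rw [gnorm, gnorm, fderiv_const_mul hd c, norm_smul, Real.norm_eq_abs]
  · have hd2 : ¬ DifferentiableAt ℝ (fun y => c * u y) x := fun h => hd <| by
      have h2 := h.const_mul c⁻¹
      simp only [← mul_assoc, inv_mul_cancel₀ hc, one_mul] at h2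
      exact h2
    rw [gnorm, gnorm, fderiv_zero_of_not_differentiableAt hd,
      fderiv_zero_of_not_differentiableAt hd2]
    simp

lemma integrableOn_of_bound {O : Set (En n)} (hO : MeasurableSet O)
    (hvol : volume O ≠ ⊤) {f : En n → ℝ} (hf : Measurable f) {M : ℝ}
    (hM : ∀ x ∈ O, |f x| ≤ M) : IntegrableOn f O := by
  have : IsFiniteMeasure (volume.restrict O) :=
    ⟨by rwa [Measure.restrict_apply_univ, lt_top_iff_ne_top]⟩
  refine Integrable.mono' (integrable_const M) hf.aestronglyMeasurable ?_
  rw [ae_restrict_iff' hO]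
  exact ae_of_all _ fun x hx => by rw [Real.norm_eq_abs]; exact hM x hx

lemma holder_step {O : Set (En n)} (hO : MeasurableSet O) (hvol : volume O ≠ ⊤)
    {g : En n → ℝ} (hgm : Measurable g) (hg0 : ∀ x, 0 ≤ g x)
    {M : ℝ} (hgM : ∀ x ∈ O, g x ≤ M)
    {p q : ℝ} (hp : 0 < p) (hpq : p < q) :
    (volume O).toReal * ((∫ x in O, g x ^ p) / (volume O).toReal) ^ (q / p)
      ≤ ∫ x in O, g x ^ q := by
  have hq : 0 < q := hp.trans hpq
  have hIq0 : 0 ≤ ∫ x in O, g x ^ q :=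
    setIntegral_nonneg hO fun x _ => Real.rpow_nonneg (hg0 x) q
  rcases eq_or_ne (volume O).toReal 0 with hV0 | hV0
  · rw [hV0, zero_mul]; exact hIq0
  have hV : 0 < (volume O).toReal := lt_of_le_of_ne ENNReal.toReal_nonneg (Ne.symm hV0)
  obtain ⟨x₀, hx₀⟩ := nonempty_of_measure_ne_zero
    (fun h => hV0 (by rw [h, ENNReal.toReal_zero]))
  have hM0 : 0 ≤ M := (hg0 x₀).trans (hgM x₀ hx₀)
  set G : En n → ℝ≥0∞ := fun x => ENNReal.ofReal (g x) with hGdef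
  have hGm : Measurable G := hgm.ennreal_ofReal
  have hLq_top : (∫⁻ x in O, G x ^ q) ≠ ⊤ := by
    have hb : (∫⁻ x in O, G x ^ q) ≤ ENNReal.ofReal M ^ q * volume O := by
      calc ∫⁻ x in O, G x ^ q ≤ ∫⁻ _ in O, ENNReal.ofReal M ^ q := by
            refine setLIntegral_mono measurable_const fun x hx => ?_
            exact ENNReal.rpow_le_rpow (ENNReal.ofReal_le_ofReal (hgM x hx)) hq.le
        _ = ENNReal.ofReal M ^ q * volume O := by rw [setLIntegral_const]
    exact ne_top_of_le_ne_top
      (ENNReal.mul_ne_top (ENNReal.rpow_ne_top_of_nonneg hq.le ENNReal.ofReal_ne_top) hvol) hb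
  have hLp_eq : ∫ x in O, g x ^ p = (∫⁻ x in O, G x ^ p).toReal := by
    rw [integral_eq_lintegral_of_nonneg_ae (ae_of_all _ fun x => Real.rpow_nonneg (hg0 x) p)
      ((hgm.pow measurable_const).aestronglyMeasurable)]
    congr 1
    exact lintegral_congr fun x => by
      rw [← ENNReal.ofReal_rpow_of_nonneg (hg0 x) hp.le]
  have hLq_eq : ∫ x in O, g x ^ q = (∫⁻ x in O, G x ^ q).toReal := by
    rw [integral_eq_lintegral_of_nonneg_ae (ae_of_all _ fun x => Real.rpow_nonneg (hg0 x) q)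
      ((hgm.pow measurable_const).aestronglyMeasurable)]
    congr 1
    exact lintegral_congr fun x => by
      rw [← ENNReal.ofReal_rpow_of_nonneg (hg0 x) hq.le]
  have hqp : q - p ≠ 0 := sub_ne_zero.mpr hpq.ne'
  have hconj : (q / p).HolderConjugate (q / (q - p)) := by
    constructor
    · rw [inv_div, inv_div, inv_one, ← add_div, add_sub_cancel, div_self hq.ne']
    · exact div_pos hq hp
    · exact div_pos hq (sub_pos.mpr hpq)
  have hkey : (∫⁻ x in O, G x ^ p) ≤ (∫⁻ x in O, G x ^ q) ^ (p / q) * volume O ^ (1 - p / q) := by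
    have h := ENNReal.lintegral_mul_le_Lp_mul_Lq (volume.restrict O) hconj
      (f := fun x => G x ^ p) (g := fun _ => (1 : ℝ≥0∞))
      ((hGm.pow (measurable_const (a := p))).aemeasurable) aemeasurable_const
    simp only [Pi.mul_apply, mul_one, ENNReal.one_rpow] at h
    have e1 : (∫⁻ x in O, (G x ^ p) ^ (q / p)) = ∫⁻ x in O, G x ^ q := by
      refine lintegral_congr fun x => ?_
      rw [← ENNReal.rpow_mul]
      congr 1
      field_simp
    have e2 : (∫⁻ _ in O, (1 : ℝ≥0∞) ∂volume) = volume O := by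
      rw [setLIntegral_one]
    rw [e1, e2, one_div_div, one_div_div] at h
    have e3 : (q - p) / q = 1 - p / q := by field_simp
    rwa [e3] at h
  rw [hLp_eq, hLq_eq]
  set Lp := ∫⁻ x in O, G x ^ p
  set Lq := ∫⁻ x in O, G x ^ q
  set V := (volume O).toReal with hVdef
  have h1pq : (0:ℝ) ≤ 1 - p / q := by
    rw [sub_nonneg]
    exact (div_le_one hq).mpr hpq.le
  have hreal : Lp.toReal ≤ Lq.toReal ^ (p / q) * V ^ (1 - p / q) := by
    have hne : Lq ^ (p / q) * volume O ^ (1 - p / q) ≠ ⊤ :=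
      ENNReal.mul_ne_top (ENNReal.rpow_ne_top_of_nonneg (by positivity) hLq_top)
        (ENNReal.rpow_ne_top_of_nonneg h1pq hvol)
    have h := ENNReal.toReal_mono hne hkey
    rwa [ENNReal.toReal_mul, ← ENNReal.toReal_rpow, ← ENNReal.toReal_rpow] at h
  have hIp0 : 0 ≤ Lp.toReal := ENNReal.toReal_nonneg
  have hIq0' : 0 ≤ Lq.toReal := ENNReal.toReal_nonneg
  have h2 : Lp.toReal / V ≤ (Lq.toReal / V) ^ (p / q) := by
    rw [Real.div_rpow hIq0' hV.le, div_le_div_iff₀ hV (Real.rpow_pos_of_pos hV _)]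
    calc Lp.toReal * V ^ (p / q)
        ≤ (Lq.toReal ^ (p / q) * V ^ (1 - p / q)) * V ^ (p / q) :=
          mul_le_mul_of_nonneg_right hreal (Real.rpow_nonneg hV.le _)
      _ = Lq.toReal ^ (p / q) * V := by
          rw [mul_assoc, ← Real.rpow_add hV, sub_add_cancel, Real.rpow_one]
  have h3 : (Lp.toReal / V) ^ (q / p) ≤ Lq.toReal / V := by
    have h := Real.rpow_le_rpow (div_nonneg hIp0 hV.le) h2 (by positivity : (0:ℝ) ≤ q / p)
    have hexp : p / q * (q / p) = 1 := by field_simp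
    rwa [← Real.rpow_mul (div_nonneg hIq0' hV.le), hexp, Real.rpow_one] at h
  calc V * (Lp.toReal / V) ^ (q / p) ≤ V * (Lq.toReal / V) :=
        mul_le_mul_of_nonneg_left h3 hV.le
    _ = Lq.toReal := by field_simp

end AuxLemmas


section MoreAux

variable {n : ℕ}

lemma aInfOn_nonneg {a : En n → ℝ} (ha : ∀ x, 0 ≤ a x) (O : Set (En n)) :
    0 ≤ aInfOn a O :=
  Real.sInf_nonneg (by rintro y ⟨z, -, rfl⟩; exact ha z)

lemma aInfOn_le {a : En n → ℝ} (ha : ∀ x, 0 ≤ a x) {O : Set (En n)} {x : En n}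
    (hx : x ∈ O) : aInfOn a O ≤ a x :=
  csInf_le ⟨0, by rintro y ⟨z, -, rfl⟩; exact ha z⟩ (mem_image_of_mem a hx)

lemma phiMinus_pos {a : En n → ℝ} (ha : ∀ x, 0 ≤ a x) (O : Set (En n)) {p q t : ℝ}
    (ht : 0 < t) : 0 < phiMinus a p q O t :=
  add_pos_of_pos_of_nonneg (Real.rpow_pos_of_pos ht p)
    (mul_nonneg (aInfOn_nonneg ha O) (Real.rpow_nonneg ht.le q))

lemma capPhiLevel_nonneg {a : En n → ℝ} (ha : ∀ x, 0 ≤ a x) {O : Set (En n)}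
    (hO : MeasurableSet O) (p q : ℝ) (E : Set (En n)) {t : ℝ} (ht : 0 < t) :
    0 ≤ capPhiLevel a p q t E O := by
  unfold capPhiLevel capLevel
  apply Real.sInf_nonneg
  rintro b ⟨u, -, rfl⟩
  refine setIntegral_nonneg hO fun x hx => div_nonneg ?_ (phiMinus_pos ha O ht).le
  exact add_nonneg (Real.rpow_nonneg (gnorm_nonneg u x) p)
    (mul_nonneg (ha x) (Real.rpow_nonneg (gnorm_nonneg u x) q))

lemma capP_bddBelow (p : ℝ) (E O : Set (En n)) (hO : MeasurableSet O) :
    BddBelow ((fun u => ∫ x in O, gnorm u x ^ p) '' Adm E O 1) := by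
  refine ⟨0, ?_⟩
  rintro b ⟨u, -, rfl⟩
  exact setIntegral_nonneg hO fun x _ => Real.rpow_nonneg (gnorm_nonneg u x) p

end MoreAux

/-- **Lower bound for the infimal capacity** (Lemma 2.3):
`cap_φ^inf(E;O) ≥ c(p,q) min{cap_p(E;O), |O| (cap_p(E;O)/|O|)^{q/p}}`. -/
theorem capPhiInf_lower_bound
    (p q : ℝ) (hp : 1 < p) (hpq : p < q) :
    ∃ c : ℝ, 0 < c ∧
      ∀ (n : ℕ) (α A : ℝ) (a : En n → ℝ) (E O : Set (En n)),
        0 < α → α ≤ 1 → (∀ x, 0 ≤ a x) → 0 ≤ A →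
        (∀ x y, |a x - a y| ≤ A * dist x y ^ α) →
        IsCompact E → E ⊆ O → IsOpen O → Bornology.IsBounded O →
        c * min (capP p E O)
            ((volume O).toReal * (capP p E O / (volume O).toReal) ^ (q / p)) ≤
          capPhiInf a p q E O := by
  refine ⟨1, one_pos, ?_⟩
  intro n α A a E O hα hα1 ha hA haH hE hEO hOopen hObd
  rw [one_mul]
  have hp0 : 0 < p := lt_trans one_pos hp
  have hq0 : 0 < q := hp0.trans hpq
  have hOm : MeasurableSet O := hOopen.measurableSet
  have hvollt : volume O < ⊤ := hObd.measure_lt_top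
  have hcapInf_nonneg : 0 ≤ capPhiInf a p q E O := by
    unfold capPhiInf
    exact Real.iInf_nonneg fun t => capPhiLevel_nonneg ha hOm p q E (mem_Ioi.mp t.2)
  by_cases hC : capP p E O ≤ 0
  · exact le_trans (le_trans (min_le_left _ _) hC) hcapInf_nonneg
  push_neg at hC
  have hbdd : BddBelow ((fun u => ∫ x in O, gnorm u x ^ p) '' Adm E O 1) :=
    capP_bddBelow p E O hOm
  have hAdm1 : (Adm E O 1).Nonempty := by
    by_contra h
    rw [not_nonempty_iff_eq_empty] at h
    have h0 : capP p E O = 0 := by rw [capP, h, image_empty, Real.sInf_empty]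
    linarith
  obtain ⟨u₀, hu₀⟩ := hAdm1
  have hvol0 : volume O ≠ 0 := by
    intro h0
    have h1 : capP p E O ≤ ∫ x in O, gnorm u₀ x ^ p := csInf_le hbdd ⟨u₀, hu₀, rfl⟩
    rw [Measure.restrict_eq_zero.mpr h0, integral_zero_measure] at h1
    linarith
  have hV : 0 < (volume O).toReal := ENNReal.toReal_pos hvol0 hvollt.ne
  set V := (volume O).toReal with hVdef
  set C := capP p E O with hCdef
  set Y := V * (C / V) ^ (q / p) with hYdef
  have haCont : Continuous a := by
    refine continuous_iff_continuousAt.2 fun x => ?_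
    have hb : Filter.Tendsto (fun y : En n => A * dist y x ^ α) (nhds x) (nhds 0) := by
      have h1 : Filter.Tendsto (fun y : En n => dist y x) (nhds x) (nhds 0) :=
        tendsto_iff_dist_tendsto_zero.mp Filter.tendsto_id
      have h2 := (h1.rpow_const (Or.inr hα.le)).const_mul A
      simpa [Real.zero_rpow hα.ne'] using h2
    have hsq : Filter.Tendsto (fun y : En n => dist (a y) (a x)) (nhds x) (nhds 0) := by
      refine squeeze_zero (fun y => dist_nonneg) (fun y => ?_) hb
      rw [Real.dist_eq]
      exact haH y x
    exact tendsto_iff_dist_tendsto_zero.mpr hsq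
  haveI : Nonempty (Ioi (0:ℝ)) := ⟨⟨1, by norm_num⟩⟩
  unfold capPhiInf
  refine le_ciInf fun tI => ?_
  obtain ⟨t, htmem⟩ := tI
  have ht : 0 < t := mem_Ioi.mp htmem
  show min C Y ≤ capPhiLevel a p q t E O
  unfold capPhiLevel capLevel
  refine le_csInf ⟨_, ⟨fun x => t * u₀ x, ?_, rfl⟩⟩ ?_
  · have h := adm_const_mul hu₀ ht
    rwa [mul_one] at h
  rintro b ⟨u, hu, rfl⟩
  show min C Y ≤ ∫ x in O, phi a p q x (gnorm u x) / phiMinus a p q O t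
  obtain ⟨K, hKlip⟩ := hu.1
  set g := gnorm u with hgdef
  have hgm : Measurable g := gnorm_measurable u
  have hg0 : ∀ x, 0 ≤ g x := gnorm_nonneg u
  have hgK : ∀ x ∈ O, g x ≤ (K : ℝ) := fun x hx =>
    norm_fderiv_le_of_lipschitzOn ℝ
      (Filter.mem_of_superset (hOopen.mem_nhds hx) subset_closure) hKlip
  obtain ⟨x₀, hx₀⟩ := nonempty_of_measure_ne_zero hvol0
  obtain ⟨R, hR⟩ := hObd.subset_closedBall x₀
  set Ma : ℝ := a x₀ + A * max R 0 ^ α with hMadef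
  have hMa0 : 0 ≤ Ma :=
    add_nonneg (ha x₀) (mul_nonneg hA (Real.rpow_nonneg (le_max_right R 0) α))
  have haM : ∀ x ∈ O, a x ≤ Ma := by
    intro x hx
    have h1 : a x - a x₀ ≤ |a x - a x₀| := le_abs_self _
    have h2 : |a x - a x₀| ≤ A * dist x x₀ ^ α := haH x x₀
    have h3 : dist x x₀ ^ α ≤ max R 0 ^ α :=
      Real.rpow_le_rpow dist_nonneg
        (le_trans (by simpa using hR hx) (le_max_left R 0)) hα.le
    have h4 : A * dist x x₀ ^ α ≤ A * max R 0 ^ α := mul_le_mul_of_nonneg_left h3 hA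
    simp only [hMadef]
    linarith
  have hIntP : IntegrableOn (fun x => g x ^ p) O volume := by
    refine integrableOn_of_bound hOm hvollt.ne
      (hgm.pow (measurable_const (a := p))) (M := (K : ℝ) ^ p) fun x hx => ?_
    rw [abs_of_nonneg (Real.rpow_nonneg (hg0 x) p)]
    exact Real.rpow_le_rpow (hg0 x) (hgK x hx) hp0.le
  have hIntQ : IntegrableOn (fun x => g x ^ q) O volume := by
    refine integrableOn_of_bound hOm hvollt.ne
      (hgm.pow (measurable_const (a := q))) (M := (K : ℝ) ^ q) fun x hx => ?_
    rw [abs_of_nonneg (Real.rpow_nonneg (hg0 x) q)]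
    exact Real.rpow_le_rpow (hg0 x) (hgK x hx) hq0.le
  have hIntaQ : IntegrableOn (fun x => a x * g x ^ q) O volume := by
    refine integrableOn_of_bound hOm hvollt.ne
      (haCont.measurable.mul (hgm.pow (measurable_const (a := q))))
      (M := Ma * (K : ℝ) ^ q) fun x hx => ?_
    rw [abs_of_nonneg (mul_nonneg (ha x) (Real.rpow_nonneg (hg0 x) q))]
    exact mul_le_mul (haM x hx) (Real.rpow_le_rpow (hg0 x) (hgK x hx) hq0.le)
      (Real.rpow_nonneg (hg0 x) q) hMa0
  set Ip := ∫ x in O, g x ^ p with hIpdef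
  set Iq := ∫ x in O, g x ^ q with hIqdef
  have hscale : t ^ p * C ≤ Ip := by
    have hv : (fun x => t⁻¹ * u x) ∈ Adm E O 1 := by
      have h := adm_const_mul hu (inv_pos.mpr ht)
      rwa [inv_mul_cancel₀ ht.ne'] at h
    have h1 : C ≤ ∫ x in O, gnorm (fun y => t⁻¹ * u y) x ^ p :=
      csInf_le hbdd ⟨_, hv, rfl⟩
    have h2 : ∀ x : En n, gnorm (fun y => t⁻¹ * u y) x ^ p = t⁻¹ ^ p * g x ^ p := by
      intro x
      rw [gnorm_const_mul u (inv_ne_zero ht.ne') x, abs_of_nonneg (inv_nonneg.mpr ht.le),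
        Real.mul_rpow (inv_nonneg.mpr ht.le) (hg0 x)]
    simp only [h2] at h1
    rw [integral_const_mul] at h1
    have h3 : t ^ p * C ≤ t ^ p * (t⁻¹ ^ p * Ip) :=
      mul_le_mul_of_nonneg_left h1 (Real.rpow_nonneg ht.le p)
    have h4 : t ^ p * (t⁻¹ ^ p * Ip) = Ip := by
      rw [← mul_assoc, ← Real.mul_rpow ht.le (inv_nonneg.mpr ht.le),
        mul_inv_cancel₀ ht.ne', Real.one_rpow, one_mul]
    linarith
  have hIp0 : 0 ≤ Ip :=
    setIntegral_nonneg hOm fun x _ => Real.rpow_nonneg (hg0 x) p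
  have hhold : V * (Ip / V) ^ (q / p) ≤ Iq :=
    holder_step hOm hvollt.ne hgm hg0 hgK hp0 hpq
  have hIq_ge : t ^ q * Y ≤ Iq := by
    have h1 : t ^ p * C / V ≤ Ip / V := by
      rw [div_eq_mul_inv, div_eq_mul_inv]
      exact mul_le_mul_of_nonneg_right hscale (inv_nonneg.mpr hV.le)
    have h2 : (t ^ p * C / V) ^ (q / p) ≤ (Ip / V) ^ (q / p) := by
      apply Real.rpow_le_rpow _ h1 (by positivity)
      positivity
    have h3 : V * (t ^ p * C / V) ^ (q / p) ≤ V * (Ip / V) ^ (q / p) :=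
      mul_le_mul_of_nonneg_left h2 hV.le
    have hpexp : p * (q / p) = q := by field_simp
    have h4 : V * (t ^ p * C / V) ^ (q / p) = t ^ q * Y := by
      rw [hYdef, mul_div_assoc,
        Real.mul_rpow (Real.rpow_nonneg ht.le p) (div_nonneg hC.le hV.le),
        ← Real.rpow_mul ht.le, hpexp]
      ring
    linarith
  have hIa_ge : aInfOn a O * Iq ≤ ∫ x in O, a x * g x ^ q := by
    have hmono : ∫ x in O, aInfOn a O * g x ^ q ≤ ∫ x in O, a x * g x ^ q :=
      setIntegral_mono_on (hIntQ.const_mul _) hIntaQ hOm fun x hx =>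
        mul_le_mul_of_nonneg_right (aInfOn_le ha hx) (Real.rpow_nonneg (hg0 x) q)
    rwa [integral_const_mul] at hmono
  have hD : 0 < phiMinus a p q O t := phiMinus_pos ha O ht
  have hb_eq : (∫ x in O, phi a p q x (g x) / phiMinus a p q O t)
      = (Ip + ∫ x in O, a x * g x ^ q) / phiMinus a p q O t := by
    rw [integral_div]
    congr 1
    rw [hIpdef, ← integral_add hIntP hIntaQ]
    exact integral_congr_ae (Filter.Eventually.of_forall fun x => rfl)
  rw [hb_eq, le_div_iff₀ hD]
  have hD_eq : phiMinus a p q O t = t ^ p + aInfOn a O * t ^ q := rfl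
  have haInf0 : 0 ≤ aInfOn a O := aInfOn_nonneg ha O
  have htp : 0 < t ^ p := Real.rpow_pos_of_pos ht p
  have htq : 0 < t ^ q := Real.rpow_pos_of_pos ht q
  have hA1 : min C Y * t ^ p ≤ Ip := by
    calc min C Y * t ^ p ≤ C * t ^ p :=
          mul_le_mul_of_nonneg_right (min_le_left _ _) htp.le
      _ = t ^ p * C := mul_comm _ _
      _ ≤ Ip := hscale
  have hA2 : min C Y * (aInfOn a O * t ^ q) ≤ aInfOn a O * Iq := by
    have h7 : min C Y * t ^ q ≤ t ^ q * Y := by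
      calc min C Y * t ^ q ≤ Y * t ^ q :=
            mul_le_mul_of_nonneg_right (min_le_right _ _) htq.le
        _ = t ^ q * Y := mul_comm _ _
    calc min C Y * (aInfOn a O * t ^ q) = aInfOn a O * (min C Y * t ^ q) := by ring
      _ ≤ aInfOn a O * (t ^ q * Y) := mul_le_mul_of_nonneg_left h7 haInf0
      _ ≤ aInfOn a O * Iq := mul_le_mul_of_nonneg_left hIq_ge haInf0
  calc min C Y * phiMinus a p q O t
      = min C Y * t ^ p + min C Y * (aInfOn a O * t ^ q) := by rw [hD_eq]; ring
    _ ≤ Ip + aInfOn a O * Iq := add_le_add hA1 hA2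
    _ ≤ Ip + ∫ x in O, a x * g x ^ q := by linarith [hIa_ge]
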